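/- The set 𝔩 = span{c⊗σz, d⊗I, i·z_n : c,d ∈ su(2^{n-1})} is a Lie subalgebra of su(2^n), i.e. it is closed under the commutator bracket. -/
import Mathlib


open Matrix Complex
open scoped Kronecker

/-- The 2×2 Pauli matrices. -/
noncomputable def σx : Matrix (Fin 2) (Fin 2) ℂ := !![0, 1; 1, 0]
noncomputable def σy : Matrix (Fin 2) (Fin 2) ℂ := !![0, -I; I, 0]
noncomputable def σz : Matrix (Fin 2) (Fin 2) ℂ := !![1, 0; 0, -1]

/-- `su ι`: traceless skew-Hermitian complex matrices indexed by `ι`. -/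
def su (ι : Type*) [Fintype ι] [DecidableEq ι] : Set (Matrix ι ι ℂ) :=
  {A | Aᴴ = -A ∧ A.trace = 0}

lemma σz_mul_σz : σz * σz = 1 := by
  ext i j
  fin_cases i <;> fin_cases j <;>
    simp [σz, Matrix.mul_apply, Fin.sum_univ_succ, Matrix.one_apply]

lemma σz_herm : σzᴴ = σz := by
  ext i j
  fin_cases i <;> fin_cases j <;> simp [σz]

lemma σz_trace : σz.trace = 0 := by
  simp [σz, Matrix.trace_fin_two]

lemma sub_kron {l n : Type*} (A B : Matrix l l ℂ) (C : Matrix n n ℂ) :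
    (A - B) ⊗ₖ C = A ⊗ₖ C - B ⊗ₖ C := by
  ext ⟨i1, i2⟩ ⟨j1, j2⟩
  simp [Matrix.kroneckerMap_apply, sub_mul]

lemma conjTranspose_kron {l n : Type*} (A : Matrix l l ℂ) (C : Matrix n n ℂ) :
    (A ⊗ₖ C)ᴴ = Aᴴ ⊗ₖ Cᴴ := by
  ext ⟨i1, i2⟩ ⟨j1, j2⟩
  simp [Matrix.kroneckerMap_apply, Matrix.conjTranspose_apply, mul_comm]

lemma bracket_mem_su {ι : Type*} [Fintype ι] [DecidableEq ι]
    {A B : Matrix ι ι ℂ} (hA : A ∈ su ι) (hB : B ∈ su ι) :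
    A * B - B * A ∈ su ι := by
  obtain ⟨hA1, hA2⟩ := hA
  obtain ⟨hB1, hB2⟩ := hB
  constructor
  · simp [Matrix.conjTranspose_sub, Matrix.conjTranspose_mul, hA1, hB1,
      Matrix.neg_mul, Matrix.mul_neg, neg_neg, neg_sub]
  · simp [Matrix.trace_sub, Matrix.trace_mul_comm A B]

/-- The subalgebra 𝔩 = span_ℝ {c ⊗ σz, d ⊗ I, i·z_n : c, d ∈ su(2^{n-1})}
of su(2^n) is closed under the commutator bracket.  Here `n = m + 1` and
the `2^n`-dimensional space is indexed by `Fin (2^m) × Fin 2`. -/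
theorem stmt0 (m : ℕ)
    (l : Submodule ℝ (Matrix (Fin (2 ^ m) × Fin 2) (Fin (2 ^ m) × Fin 2) ℂ))
    (hl : l = Submodule.span ℝ
      {M | (∃ c ∈ su (Fin (2 ^ m)), M = c ⊗ₖ σz) ∨
           (∃ d ∈ su (Fin (2 ^ m)), M = d ⊗ₖ (1 : Matrix (Fin 2) (Fin 2) ℂ)) ∨
           M = Complex.I • ((1 : Matrix (Fin (2 ^ m)) (Fin (2 ^ m)) ℂ) ⊗ₖ σz)}) :
    (↑l : Set _) ⊆ su (Fin (2 ^ m) × Fin 2) ∧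
    ∀ A ∈ l, ∀ B ∈ l, A * B - B * A ∈ l := by
  set S : Set (Matrix (Fin (2 ^ m) × Fin 2) (Fin (2 ^ m) × Fin 2) ℂ) :=
      {M | (∃ c ∈ su (Fin (2 ^ m)), M = c ⊗ₖ σz) ∨
           (∃ d ∈ su (Fin (2 ^ m)), M = d ⊗ₖ (1 : Matrix (Fin 2) (Fin 2) ℂ)) ∨
           M = Complex.I • ((1 : Matrix (Fin (2 ^ m)) (Fin (2 ^ m)) ℂ) ⊗ₖ σz)} with hS
  -- the target `su` as a real submodule
  set suM : Submodule ℝ (Matrix (Fin (2 ^ m) × Fin 2) (Fin (2 ^ m) × Fin 2) ℂ) :=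
    { carrier := su (Fin (2 ^ m) × Fin 2)
      add_mem' := by
        rintro a b ⟨ha1, ha2⟩ ⟨hb1, hb2⟩
        refine ⟨?_, by simp [ha2, hb2]⟩
        rw [Matrix.conjTranspose_add, ha1, hb1, neg_add]
      zero_mem' := ⟨by simp, by simp⟩
      smul_mem' := by
        rintro r a ⟨ha1, ha2⟩
        refine ⟨?_, by simp [ha2]⟩
        rw [Matrix.conjTranspose_smul, ha1]
        simp } with hsuM
  constructor
  · -- containment in su
    have : l ≤ suM := by
      rw [hl]
      refine Submodule.span_le.2 ?_
      rintro M (⟨c, ⟨hc1, hc2⟩, rfl⟩ | ⟨d, ⟨hd1, hd2⟩, rfl⟩ | rfl)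
      · refine ⟨?_, by rw [Matrix.trace_kronecker, hc2, zero_mul]⟩
        rw [conjTranspose_kron, hc1, σz_herm]
        ext ⟨i1, i2⟩ ⟨j1, j2⟩
        simp [Matrix.kroneckerMap_apply]
      · refine ⟨?_, by rw [Matrix.trace_kronecker, hd2, zero_mul]⟩
        rw [conjTranspose_kron, hd1, Matrix.conjTranspose_one]
        ext ⟨i1, i2⟩ ⟨j1, j2⟩
        simp [Matrix.kroneckerMap_apply]
      · constructor
        · rw [Matrix.conjTranspose_smul, conjTranspose_kron, Matrix.conjTranspose_one,
            σz_herm]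
          simp [Complex.conj_I]
        · rw [Matrix.trace_smul, Matrix.trace_kronecker, σz_trace]
          simp
    intro x hx
    exact this hx
  · -- closure under bracket
    have hSl : S ⊆ (l : Set _) := by rw [hl]; exact Submodule.subset_span
    -- brackets of generators
    have hgen : ∀ A ∈ S, ∀ B ∈ S, A * B - B * A ∈ l := by
      rintro A (⟨c, hc, rfl⟩ | ⟨d, hd, rfl⟩ | rfl) B (⟨c', hc', rfl⟩ | ⟨d', hd', rfl⟩ | rfl)
      · -- [c⊗σz, c'⊗σz] = [c,c'] ⊗ 1
        have : c ⊗ₖ σz * c' ⊗ₖ σz - c' ⊗ₖ σz * c ⊗ₖ σz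
            = (c * c' - c' * c) ⊗ₖ (1 : Matrix (Fin 2) (Fin 2) ℂ) := by
          rw [← Matrix.mul_kronecker_mul, ← Matrix.mul_kronecker_mul, σz_mul_σz, sub_kron]
        rw [this]
        exact hSl (Or.inr (Or.inl ⟨_, bracket_mem_su hc hc', rfl⟩))
      · -- [c⊗σz, d'⊗1] = [c,d'] ⊗ σz
        have : c ⊗ₖ σz * d' ⊗ₖ (1 : Matrix (Fin 2) (Fin 2) ℂ)
            - d' ⊗ₖ (1 : Matrix (Fin 2) (Fin 2) ℂ) * c ⊗ₖ σz
            = (c * d' - d' * c) ⊗ₖ σz := by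
          rw [← Matrix.mul_kronecker_mul, ← Matrix.mul_kronecker_mul, mul_one, one_mul,
            sub_kron]
        rw [this]
        exact hSl (Or.inl ⟨_, bracket_mem_su hc hd', rfl⟩)
      · -- [c⊗σz, i(1⊗σz)] = 0
        have : c ⊗ₖ σz * (Complex.I • ((1 : Matrix (Fin (2 ^ m)) (Fin (2 ^ m)) ℂ) ⊗ₖ σz))
            - (Complex.I • ((1 : Matrix (Fin (2 ^ m)) (Fin (2 ^ m)) ℂ) ⊗ₖ σz)) * c ⊗ₖ σz
            = 0 := by
          rw [Matrix.mul_smul, Matrix.smul_mul]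
          simp [← Matrix.mul_kronecker_mul, σz_mul_σz]
        rw [this]; exact l.zero_mem
      · -- [d⊗1, c'⊗σz]
        have : d ⊗ₖ (1 : Matrix (Fin 2) (Fin 2) ℂ) * c' ⊗ₖ σz
            - c' ⊗ₖ σz * d ⊗ₖ (1 : Matrix (Fin 2) (Fin 2) ℂ)
            = (d * c' - c' * d) ⊗ₖ σz := by
          rw [← Matrix.mul_kronecker_mul, ← Matrix.mul_kronecker_mul, mul_one, one_mul,
            sub_kron]
        rw [this]
        exact hSl (Or.inl ⟨_, bracket_mem_su hd hc', rfl⟩)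
      · -- [d⊗1, d'⊗1]
        have : d ⊗ₖ (1 : Matrix (Fin 2) (Fin 2) ℂ) * d' ⊗ₖ (1 : Matrix (Fin 2) (Fin 2) ℂ)
            - d' ⊗ₖ (1 : Matrix (Fin 2) (Fin 2) ℂ) * d ⊗ₖ (1 : Matrix (Fin 2) (Fin 2) ℂ)
            = (d * d' - d' * d) ⊗ₖ (1 : Matrix (Fin 2) (Fin 2) ℂ) := by
          rw [← Matrix.mul_kronecker_mul, ← Matrix.mul_kronecker_mul, mul_one, sub_kron]
        rw [this]
        exact hSl (Or.inr (Or.inl ⟨_, bracket_mem_su hd hd', rfl⟩))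
      · -- [d⊗1, i(1⊗σz)] = 0
        have : d ⊗ₖ (1 : Matrix (Fin 2) (Fin 2) ℂ)
              * (Complex.I • ((1 : Matrix (Fin (2 ^ m)) (Fin (2 ^ m)) ℂ) ⊗ₖ σz))
            - (Complex.I • ((1 : Matrix (Fin (2 ^ m)) (Fin (2 ^ m)) ℂ) ⊗ₖ σz))
              * d ⊗ₖ (1 : Matrix (Fin 2) (Fin 2) ℂ)
            = 0 := by
          rw [Matrix.mul_smul, Matrix.smul_mul]
          simp [← Matrix.mul_kronecker_mul, σz_mul_σz]
        rw [this]; exact l.zero_mem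
      · -- [i(1⊗σz), c'⊗σz] = 0
        have : (Complex.I • ((1 : Matrix (Fin (2 ^ m)) (Fin (2 ^ m)) ℂ) ⊗ₖ σz)) * c' ⊗ₖ σz
            - c' ⊗ₖ σz * (Complex.I • ((1 : Matrix (Fin (2 ^ m)) (Fin (2 ^ m)) ℂ) ⊗ₖ σz))
            = 0 := by
          rw [Matrix.mul_smul, Matrix.smul_mul]
          simp [← Matrix.mul_kronecker_mul, σz_mul_σz]
        rw [this]; exact l.zero_mem
      · -- [i(1⊗σz), d'⊗1] = 0
        have : (Complex.I • ((1 : Matrix (Fin (2 ^ m)) (Fin (2 ^ m)) ℂ) ⊗ₖ σz))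
              * d' ⊗ₖ (1 : Matrix (Fin 2) (Fin 2) ℂ)
            - d' ⊗ₖ (1 : Matrix (Fin 2) (Fin 2) ℂ)
              * (Complex.I • ((1 : Matrix (Fin (2 ^ m)) (Fin (2 ^ m)) ℂ) ⊗ₖ σz))
            = 0 := by
          rw [Matrix.mul_smul, Matrix.smul_mul]
          simp [← Matrix.mul_kronecker_mul, σz_mul_σz]
        rw [this]; exact l.zero_mem
      · simp
    -- extend by bilinearity using comaps
    have step1 : ∀ A ∈ S, ∀ B ∈ l, A * B - B * A ∈ l := by
      intro A hA B hB
      have hle : l ≤ l.comap (LinearMap.mulLeft ℝ A - LinearMap.mulRight ℝ A) := by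
        conv_lhs => rw [hl]
        refine Submodule.span_le.2 fun C hC => ?_
        simpa [Submodule.mem_comap] using hgen A hA C (hS ▸ hC)
      simpa [Submodule.mem_comap] using hle hB
    intro A hA B hB
    have hle : l ≤ l.comap (LinearMap.mulRight ℝ B - LinearMap.mulLeft ℝ B) := by
      conv_lhs => rw [hl]
      refine Submodule.span_le.2 fun C hC => ?_
      simpa [Submodule.mem_comap] using step1 C (hS ▸ hC) B hB
    simpa [Submodule.mem_comap] using hle hA
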